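/- arXiv:2205.09475 — 2 statements merged into one kernel-verified Lean document; each statement's English description precedes it below -/
import Mathlib

section
/- For all n ≥ 1, the coefficient of μ^1 in a_n(μ) equals −(n^3 + 3n^2 + 2n)/3. -/
noncomputable def p : ℕ → Polynomial ℚ
  | 0 => 1
  | 1 => 2 * (1 - Polynomial.X)
  | n + 2 => 2 * (1 - Polynomial.X) * p (n + 1) - p n

open Polynomial in
lemma p_succ_succ (n : ℕ) :
    p (n + 2) = 2 * p (n + 1) - 2 * (X * p (n + 1)) - p n := by
  rw [p]; ring

open Polynomial in
lemma p_coeff0 (n : ℕ) : (p n).coeff 0 = n + 1 := by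
  induction n using Nat.twoStepInduction with
  | zero => norm_num [p, Polynomial.coeff_one]
  | one => norm_num [p, Polynomial.coeff_one]
  | more n ih1 ih2 =>
    rw [p_succ_succ]
    simp only [Polynomial.coeff_sub, Polynomial.coeff_ofNat_mul, Polynomial.coeff_X_mul]
    simp [Polynomial.coeff_X_mul, ih1, ih2]
    push_cast
    ring

open Polynomial in
lemma p_coeff1 (n : ℕ) :
    (p n).coeff 1 = -((n : ℚ) ^ 3 + 3 * (n : ℚ) ^ 2 + 2 * n) / 3 := by
  induction n using Nat.twoStepInduction with
  | zero => norm_num [p, Polynomial.coeff_one]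
  | one => norm_num [p, Polynomial.coeff_one]
  | more n ih1 ih2 =>
    simp [p_succ_succ, Polynomial.coeff_X_mul, ih1, ih2, p_coeff0]
    push_cast
    ring

theorem stmt5 (n : ℕ) (hn : 1 ≤ n) :
    (p n).coeff 1 = -((n : ℚ) ^ 3 + 3 * (n : ℚ) ^ 2 + 2 * n) / 3 := p_coeff1 n
end

section
/- Let a sequence S_g satisfy S_g = (n+1)^{N_{g−1}−1} · n^{E_{g−1}−N_{g−1}+1} · S_{g−1}, where E_g = (n+1)^g E_0 and N_g = N_0 + (n−1)((n+1)^g−1)/n · E_0 (with E_0 divisible appropriately so that all exponents are natural numbers). Then for all g ≥ 1, S_g = (n+1)^{((n−1)[(n+1)^g − n·g − 1]/n^2)·E_0 + g·N_0 − g} · n^{(((n+1)^g + (n−1)n·g − 1)/n^2)·E_0 − g·N_0 + g} · S_0. -/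
private def auxU (m : ℤ) : ℕ → ℤ
  | 0 => 0
  | g+1 => (m+1) * auxU m g + 1

private def auxV (m : ℤ) : ℕ → ℤ
  | 0 => 0
  | g+1 => (m+1) * auxV m g + g

private def auxW (m : ℤ) : ℕ → ℤ
  | 0 => 0
  | g+1 => (m+1) * auxW m g + 1 - (m-1) * g

private lemma auxU_spec (m : ℤ) : ∀ g, m * auxU m g = (m+1)^g - 1
  | 0 => by simp [auxU]
  | g+1 => by
    simp only [auxU]
    linear_combination (m+1) * auxU_spec m g

private lemma auxV_spec (m : ℤ) : ∀ g, m^2 * auxV m g = (m+1)^g - m*g - 1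
  | 0 => by simp [auxV]
  | g+1 => by
    simp only [auxV]
    push_cast
    linear_combination (m+1) * auxV_spec m g

private lemma auxW_spec (m : ℤ) : ∀ g, m^2 * auxW m g = (m+1)^g + (m-1)*m*g - 1
  | 0 => by simp [auxW]
  | g+1 => by
    simp only [auxW]
    push_cast
    linear_combination (m+1) * auxW_spec m g

private lemma auxV_delta (m : ℤ) (hm : m ≠ 0) (g : ℕ) :
    auxV m (g+1) = auxV m g + auxU m g := by
  have h2 : (m^2 : ℤ) ≠ 0 := pow_ne_zero 2 hm
  apply mul_left_cancel₀ h2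
  have h1 := auxV_spec m (g+1)
  have h0 := auxV_spec m g
  have hu := auxU_spec m g
  push_cast at h1 ⊢
  linear_combination h1 - h0 - m * hu

private lemma auxW_delta (m : ℤ) (hm : m ≠ 0) (g : ℕ) :
    auxW m (g+1) = auxW m g + ((m+1)^g - (m-1) * auxU m g) := by
  have h2 : (m^2 : ℤ) ≠ 0 := pow_ne_zero 2 hm
  apply mul_left_cancel₀ h2
  have h1 := auxW_spec m (g+1)
  have h0 := auxW_spec m g
  have hu := auxU_spec m g
  push_cast at h1 ⊢
  linear_combination h1 - h0 + (m-1) * m * hu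

private lemma mul_shuffle (x y : ℝ) (hx : x ≠ 0) (hy : y ≠ 0) (a b c d : ℤ) (s : ℝ) :
    x^a * y^b * (x^c * y^d * s) = x^c * x^a * (y^d * y^b) * s := by ring

theorem stmt19 (n : ℕ) (hn : 2 ≤ n) (N0 E0 : ℕ) (hN0 : 0 < N0) (hE0 : 0 < E0)
    (N E : ℕ → ℕ)
    (hN0' : N 0 = N0) (hE0' : E 0 = E0)
    (hNrec : ∀ g, N (g + 1) = N g + (n - 1) * E g)
    (hErec : ∀ g, E (g + 1) = (n + 1) * E g)
    (S : ℕ → ℝ)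
    (hSrec : ∀ g, 1 ≤ g → S g =
      ((n : ℝ) + 1) ^ ((N (g - 1) : ℤ) - 1) * (n : ℝ) ^ ((E (g - 1) : ℤ) - N (g - 1) + 1) * S (g - 1)) :
    ∀ g, 1 ≤ g → S g =
      ((n : ℝ) + 1) ^ ((((n : ℤ) - 1) * (((n : ℤ) + 1) ^ g - n * g - 1) / n ^ 2) * E0 + g * N0 - g)
      * (n : ℝ) ^ (((((n : ℤ) + 1) ^ g + ((n : ℤ) - 1) * n * g - 1) / n ^ 2) * E0 - g * N0 + g)
      * S 0 := by
  set m : ℤ := (n : ℤ) with hm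
  have hm2 : (2:ℤ) ≤ m := by rw [hm]; exact_mod_cast hn
  have hmz : m ≠ 0 := by omega
  have h2 : (m^2 : ℤ) ≠ 0 := pow_ne_zero 2 hmz
  have hb1 : ((n : ℝ) + 1) ≠ 0 := by positivity
  have hb2 : (n : ℝ) ≠ 0 := by
    have : 0 < n := by omega
    positivity
  -- closed forms
  have hE : ∀ g, (E g : ℤ) = (m+1)^g * E0 := by
    intro g
    induction g with
    | zero => simp [hE0']
    | succ g ih => rw [hErec]; push_cast; rw [ih]; ring
  have hN : ∀ g, (N g : ℤ) = N0 + (m-1) * E0 * auxU m g := by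
    intro g
    induction g with
    | zero => simp [hN0', auxU]
    | succ g ih =>
      rw [hNrec]
      have hc : ((n - 1 : ℕ) : ℤ) = m - 1 := by
        have : 1 ≤ n := by omega
        push_cast [this]
        ring
      push_cast
      rw [hc, ih, hE g, auxU]
      linear_combination (-((m - 1) * (E0 : ℤ))) * auxU_spec m g
  -- main induction
  have main : ∀ k : ℕ, S (k+1) =
      ((n : ℝ) + 1) ^ ((m - 1) * auxV m (k+1) * E0 + (k+1) * N0 - (k+1))
      * (n : ℝ) ^ (auxW m (k+1) * E0 - (k+1) * N0 + (k+1)) * S 0 := by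
    intro k
    induction k with
    | zero =>
      have h := hSrec 1 le_rfl
      simp only [Nat.sub_self] at h
      rw [h, hN0', hE0']
      norm_num [auxV, auxW, auxU]
    | succ k ih =>
      have h := hSrec (k+2) (by omega)
      have hsub : (k+2) - 1 = k+1 := rfl
      rw [hsub] at h
      have hx : (m - 1) * auxV m (k+1+1) * (E0:ℤ) + (((k+1:ℕ):ℤ) + 1) * N0 - (((k+1:ℕ):ℤ) + 1)
          = ((m - 1) * auxV m (k+1) * E0 + (((k:ℕ):ℤ)+1) * N0 - (((k:ℕ):ℤ)+1)) + ((N (k+1) : ℤ) - 1) := by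
        rw [hN (k+1), auxV_delta m hmz (k+1)]
        push_cast
        ring
      have hy : auxW m (k+1+1) * (E0:ℤ) - (((k+1:ℕ):ℤ) + 1) * N0 + (((k+1:ℕ):ℤ) + 1)
          = (auxW m (k+1) * E0 - (((k:ℕ):ℤ)+1) * N0 + (((k:ℕ):ℤ)+1)) + ((E (k+1) : ℤ) - N (k+1) + 1) := by
        rw [hN (k+1), hE (k+1), auxW_delta m hmz (k+1)]
        push_cast
        ring
      rw [h, ih, hx, hy,
        zpow_add₀ hb1 ((m - 1) * auxV m (k+1) * (E0:ℤ) + (((k:ℕ):ℤ)+1) * N0 - (((k:ℕ):ℤ)+1))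
          ((N (k+1) : ℤ) - 1),
        zpow_add₀ hb2 (auxW m (k+1) * (E0:ℤ) - (((k:ℕ):ℤ)+1) * N0 + (((k:ℕ):ℤ)+1))
          ((E (k+1) : ℤ) - (N (k+1) : ℤ) + 1)]
      exact mul_shuffle _ _ hb1 hb2 _ _ _ _ _
  intro g hg
  obtain ⟨k, rfl⟩ : ∃ k, g = k + 1 := ⟨g - 1, by omega⟩
  have hv := auxV_spec m (k+1)
  have hw := auxW_spec m (k+1)
  have hmain := main k
  push_cast at hv hw hmain ⊢
  have hdx : (m - 1) * ((m+1)^(k+1) - m*((k:ℤ)+1) - 1) / m^2 = (m - 1) * auxV m (k+1) := by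
    rw [← hv, show (m-1) * (m^2 * auxV m (k+1)) = m^2 * ((m-1) * auxV m (k+1)) by ring,
      Int.mul_ediv_cancel_left _ h2]
  have hdy : ((m+1)^(k+1) + (m-1)*m*((k:ℤ)+1) - 1) / m^2 = auxW m (k+1) := by
    rw [← hw, Int.mul_ediv_cancel_left _ h2]
  rw [hdx, hdy]
  convert hmain using 4 <;> push_cast <;> ring
end
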